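/- Let (T,F) be a graph-labelled tree. The accessibility graph G(T,F) is connected if and only if for every internal node v of T the label graph G_v is connected. -/

import Mathlib

open SimpleGraph

variable {V : Type}

/-- A vertex of a tree is a leaf if it has exactly one neighbour. -/
def IsLeaf (T : SimpleGraph V) (v : V) : Prop := ∃! w, T.Adj v w

/-- Admissibility of a walk in a graph-labelled tree: at every internal vertex of the
walk, the marker vertices corresponding to the two consecutive tree-edges are adjacent
in the label graph. -/
inductive Admissible (T : SimpleGraph V) (F : ∀ v : V, SimpleGraph (T.neighborSet v)) :
    ∀ {a b : V}, T.Walk a b → Prop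
  | nil {a : V} : Admissible T F (SimpleGraph.Walk.nil : T.Walk a a)
  | single {a b : V} (h : T.Adj a b) :
      Admissible T F (SimpleGraph.Walk.cons h SimpleGraph.Walk.nil)
  | cons {a v b c : V} (h1 : T.Adj a v) (h2 : T.Adj v b) (p : T.Walk b c)
      (hadj : (F v).Adj ⟨a, h1.symm⟩ ⟨b, h2⟩)
      (hp : Admissible T F (SimpleGraph.Walk.cons h2 p)) :
      Admissible T F (SimpleGraph.Walk.cons h1 (SimpleGraph.Walk.cons h2 p))

/-- `b` is accessible from `a`: the (unique) path joining them is admissible. -/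
def Accessible (T : SimpleGraph V) (F : ∀ v : V, SimpleGraph (T.neighborSet v))
    (a b : V) : Prop :=
  ∃ p : T.Walk a b, p.IsPath ∧ Admissible T F p

/-- The accessibility graph of a graph-labelled tree: vertices are the leaves of the
tree, two leaves being adjacent iff one is accessible from the other. -/
def accGraph (T : SimpleGraph V) (F : ∀ v : V, SimpleGraph (T.neighborSet v)) :
    SimpleGraph {v : V // IsLeaf T v} :=
  SimpleGraph.fromRel (fun x y => Accessible T F ↑x ↑y)

namespace stmt0aux

variable {T : SimpleGraph V} {F : ∀ v : V, SimpleGraph (T.neighborSet v)}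

lemma adm_inv {a v b c : V} {h1 : T.Adj a v} {h2 : T.Adj v b} {p : T.Walk b c}
    (h : Admissible T F (Walk.cons h1 (Walk.cons h2 p))) :
    (F v).Adj ⟨a, h1.symm⟩ ⟨b, h2⟩ ∧ Admissible T F (Walk.cons h2 p) := by
  cases h with
  | cons _ _ _ hadj hp => exact ⟨hadj, hp⟩

lemma adm_append' {a u v c : V} (p : T.Walk a u) (h : T.Adj u v) (q : T.Walk v c)
    (hp : Admissible T F (p.append (Walk.cons h Walk.nil)))
    (hq : Admissible T F (Walk.cons h q)) :
    Admissible T F (p.append (Walk.cons h q)) := by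
  induction p with
  | nil => simpa using hq
  | cons h' p' ih =>
    cases p' with
    | nil =>
      simp only [Walk.cons_append, Walk.nil_append] at hp ⊢
      exact Admissible.cons _ _ _ (adm_inv hp).1 hq
    | cons h'' p'' =>
      simp only [Walk.cons_append] at hp ⊢
      exact Admissible.cons _ _ _ (adm_inv hp).1 (ih _ (adm_inv hp).2 hq)

lemma adm_reverse {a b : V} {p : T.Walk a b} (hp : Admissible T F p) :
    Admissible T F p.reverse := by
  induction hp with
  | nil => simpa using Admissible.nil
  | single h => simpa using Admissible.single h.symm
  | cons h1 h2 p hadj hp ih =>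
    have key : Admissible T F ((Walk.cons h2 p).reverse.append (Walk.cons h1.symm Walk.nil)) := by
      have hrw : (Walk.cons h2 p).reverse = p.reverse.append (Walk.cons h2.symm Walk.nil) := by
        simp [Walk.reverse_cons]
      rw [hrw, ← Walk.append_assoc]
      refine adm_append' p.reverse h2.symm _ ?_ ?_
      · rw [← hrw]; exact ih
      · exact Admissible.cons _ _ _ (by exact hadj.symm) (Admissible.single h1.symm)
    simpa [Walk.reverse_cons, ← Walk.append_assoc] using key

/-- Admissibility gives marker adjacency at any interior junction. -/
lemma adm_junction {x c v d y : V} (P : T.Walk x c) (h1 : T.Adj c v) (h2 : T.Adj v d)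
    (r : T.Walk d y) :
    Admissible T F (P.append (Walk.cons h1 (Walk.cons h2 r))) →
    (F v).Adj ⟨c, h1.symm⟩ ⟨d, h2⟩ := by
  induction P with
  | nil => intro h; exact (adm_inv (by simpa using h)).1
  | cons h' P' ih =>
    intro h
    rw [Walk.cons_append] at h
    cases P' with
    | nil => exact ih h1 (by simpa using (adm_inv (by simpa using h)).2)
    | cons h'' P'' =>
      rw [Walk.cons_append] at h
      exact ih h1 (by rw [Walk.cons_append]; exact (adm_inv h).2)

/-- First-break decomposition of a non-admissible walk. -/
lemma first_break {x y : V} (p : T.Walk x y) (hnadm : ¬ Admissible T F p) :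
    ∃ (u v w : V) (h1 : T.Adj u v) (h2 : T.Adj v w) (q : T.Walk x u) (r : T.Walk w y),
      p = q.append (Walk.cons h1 (Walk.cons h2 r)) ∧
      Admissible T F (q.append (Walk.cons h1 Walk.nil)) ∧
      ¬ (F v).Adj ⟨u, h1.symm⟩ ⟨w, h2⟩ := by
  induction p with
  | nil => exact absurd Admissible.nil hnadm
  | cons h p' ih =>
    cases p' with
    | nil => exact absurd (Admissible.single h) hnadm
    | cons h2 p'' =>
      by_cases hadj : (F _).Adj ⟨_, h.symm⟩ ⟨_, h2⟩
      · have hnadm' : ¬ Admissible T F (Walk.cons h2 p'') := fun ha =>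
          hnadm (Admissible.cons _ _ _ hadj ha)
        obtain ⟨u, v, w, h1', h2', q, r, hdec, hadm, hnot⟩ := ih hnadm'
        refine ⟨u, v, w, h1', h2', Walk.cons h q, r, by simp [hdec], ?_, hnot⟩
        rw [Walk.cons_append]
        cases q with
        | nil =>
          simp only [Walk.nil_append] at hdec ⊢
          injection hdec with e1 e2 e3 e4
          subst e2
          exact Admissible.cons _ _ _ hadj (Admissible.single h1')
        | cons hq q' =>
          rw [Walk.cons_append] at hdec hadm ⊢
          injection hdec with e1 e2 e3 e4
          subst e2
          exact Admissible.cons _ _ _ hadj hadm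
      · exact ⟨_, _, _, h, h2, Walk.nil, p'', by simp, Admissible.single h, hadj⟩

variable (F) in
/-- The total "break measure" of a walk: sum over interior vertices of
(label-distance between in/out markers minus one). -/
noncomputable def brk : ∀ {a b : V}, T.Walk a b → ℕ
  | _, _, Walk.nil => 0
  | _, _, Walk.cons _ Walk.nil => 0
  | _, _, Walk.cons h1 (Walk.cons h2 p) =>
      ((F _).dist ⟨_, h1.symm⟩ ⟨_, h2⟩ - 1) + brk (Walk.cons h2 p)

@[simp] lemma brk_nil {a : V} : brk F (Walk.nil : T.Walk a a) = 0 := rfl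
@[simp] lemma brk_single {a b : V} (h : T.Adj a b) :
    brk F (Walk.cons h Walk.nil) = 0 := rfl
lemma brk_cons_cons {a v b c : V} (h1 : T.Adj a v) (h2 : T.Adj v b) (p : T.Walk b c) :
    brk F (Walk.cons h1 (Walk.cons h2 p)) =
      ((F v).dist ⟨a, h1.symm⟩ ⟨b, h2⟩ - 1) + brk F (Walk.cons h2 p) := by simp [brk]

lemma brk_append {x u v y : V} (P : T.Walk x u) (h : T.Adj u v) (Q : T.Walk v y)
    (hadm : Admissible T F (P.append (Walk.cons h Walk.nil))) :
    brk F (P.append (Walk.cons h Q)) = brk F (Walk.cons h Q) := by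
  induction P with
  | nil => simp
  | cons h' P' ih =>
    cases P' with
    | nil =>
      simp only [Walk.cons_append, Walk.nil_append] at hadm ⊢
      have hadj := (adm_inv hadm).1
      have hd : (F _).dist ⟨_, h'.symm⟩ ⟨_, h⟩ ≤ 1 := by
        simpa using SimpleGraph.dist_le (Walk.cons hadj Walk.nil)
      rw [brk_cons_cons]
      omega
    | cons h'' P'' =>
      simp only [Walk.cons_append] at hadm ⊢
      have hadj := (adm_inv hadm).1
      have hd : (F _).dist ⟨_, h'.symm⟩ ⟨_, h''⟩ ≤ 1 := by
        simpa using SimpleGraph.dist_le (Walk.cons hadj Walk.nil)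
      have hih := ih h (by rw [Walk.cons_append]; exact (adm_inv hadm).2)
      rw [Walk.cons_append] at hih
      rw [brk_cons_cons, hih]
      omega

/-! ### Tree helpers -/

lemma bridge_not_reach (hA : T.IsAcyclic) {v a : V} (h : T.Adj v a) :
    ¬ (T.deleteEdges {s(v, a)}).Reachable v a :=
  isBridge_iff.mp ((isAcyclic_iff_forall_adj_isBridge.mp hA) h)

/-- A walk avoiding the vertex `v` gives reachability in `T.deleteEdges {s(v,m)}`. -/
lemma avoid_reach {v m u x : V} (W : T.Walk u x) (hv : v ∉ W.support) :
    (T.deleteEdges {s(v, m)}).Reachable u x := by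
  refine ⟨W.toDeleteEdges _ fun e he hmem => ?_⟩
  rw [Set.mem_singleton_iff] at hmem
  subst hmem
  exact hv (W.fst_mem_support_of_mem_edges he)

lemma reach_of_mem_support {G : SimpleGraph V} {u x z : V} (W : G.Walk u x)
    (hz : z ∈ W.support) : G.Reachable u z := by
  classical
  exact ⟨W.takeUntil z hz⟩

lemma reach_trans_edge (hA : T.IsAcyclic) {v a m x : V} (hva : T.Adj v a) (ham : T.Adj a m)
    (hvm : v ≠ m) (hreach : (T.deleteEdges {s(v, a)}).Reachable v x) :
    (T.deleteEdges {s(a, m)}).Reachable a x := by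
  classical
  obtain ⟨W⟩ := hreach
  have haW : a ∉ W.support := fun hmem =>
    bridge_not_reach hA hva ⟨W.takeUntil a hmem⟩
  -- move W to a walk in T
  have hWT : ∀ e ∈ W.edges, e ∈ T.edgeSet := fun e he => by
    have := W.edges_subset_edgeSet he
    rw [edgeSet_deleteEdges] at this
    exact this.1
  have hsup : a ∉ (W.transfer T hWT).support := by
    rwa [Walk.support_transfer]
  have h1 : (T.deleteEdges {s(a, m)}).Reachable v x := avoid_reach (W.transfer T hWT) hsup
  have h2 : (T.deleteEdges {s(a, m)}).Adj a v := by
    rw [deleteEdges_adj]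
    refine ⟨hva.symm, ?_⟩
    simp only [Set.mem_singleton_iff, Sym2.congr_right]
    exact fun hcon => hvm hcon
  exact h2.reachable.trans h1

lemma not_leaf_exists_other {a v : V} (hal : ¬ IsLeaf T a) (hv : T.Adj a v) :
    ∃ b, T.Adj a b ∧ b ≠ v := by
  by_contra hcon
  push_neg at hcon
  exact hal ⟨v, hv, fun y hy => hcon y hy⟩

lemma branch_ssubset (hA : T.IsAcyclic) {v a m : V} (hva : T.Adj v a) (ham : T.Adj a m)
    (hvm : v ≠ m) :
    {x | ¬ (T.deleteEdges {s(a, m)}).Reachable a x} ⊂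
      {x | ¬ (T.deleteEdges {s(v, a)}).Reachable v x} := by
  constructor
  · intro x hx hreach
    exact hx (reach_trans_edge hA hva ham hvm hreach)
  · intro hsub
    exact (hsub (bridge_not_reach hA hva)) (Reachable.refl a)

variable [Fintype V]

lemma exists_leaf_branch (hA : T.IsAcyclic) :
    ∀ (n : ℕ) {v a : V}, T.Adj v a →
    Set.ncard {x | ¬ (T.deleteEdges {s(v, a)}).Reachable v x} ≤ n →
    ∃ l, IsLeaf T l ∧ ¬ (T.deleteEdges {s(v, a)}).Reachable v l := by
  intro n
  induction n with
  | zero =>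
    intro v a hva hcard
    exfalso
    have hmem : a ∈ {x | ¬ (T.deleteEdges {s(v, a)}).Reachable v x} :=
      bridge_not_reach hA hva
    have := Set.ncard_eq_zero (Set.toFinite _) |>.mp (Nat.le_zero.mp hcard)
    rw [this] at hmem
    exact hmem
  | succ n ih =>
    intro v a hva hcard
    by_cases hleaf : IsLeaf T a
    · exact ⟨a, hleaf, bridge_not_reach hA hva⟩
    · obtain ⟨b, hab, hbv⟩ := not_leaf_exists_other hleaf hva.symm
      have hss := branch_ssubset hA hva hab hbv.symm
      have hlt : Set.ncard {x | ¬ (T.deleteEdges {s(a, b)}).Reachable a x} < n + 1 :=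
        lt_of_lt_of_le (Set.ncard_lt_ncard hss (Set.toFinite _)) hcard
      obtain ⟨l, hl, hlr⟩ := ih hab (Nat.lt_succ_iff.mp hlt)
      refine ⟨l, hl, fun hreach => hlr (reach_trans_edge hA hva hab hbv.symm hreach)⟩

lemma exists_leaf_branch' (hA : T.IsAcyclic) {v a : V} (hva : T.Adj v a) :
    ∃ l, IsLeaf T l ∧ ¬ (T.deleteEdges {s(v, a)}).Reachable v l :=
  exists_leaf_branch hA _ hva le_rfl

lemma exists_adj_of_connected {W : Type*} {G : SimpleGraph W} (hc : G.Connected)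
    {x y : W} (hxy : x ≠ y) : ∃ m, G.Adj x m := by
  obtain ⟨P⟩ := hc x y
  cases P with
  | nil => exact absurd rfl hxy
  | cons h _ => exact ⟨_, h⟩

lemma exists_acc_leaf_branch (hA : T.IsAcyclic)
    (hF : ∀ v : V, ¬ IsLeaf T v → (F v).Connected) :
    ∀ (n : ℕ) {v a : V} (hva : T.Adj v a),
    Set.ncard {x | ¬ (T.deleteEdges {s(v, a)}).Reachable v x} ≤ n →
    ∃ (l : V) (hl : IsLeaf T l) (p : T.Walk a l),
      (Walk.cons hva p).IsPath ∧ Admissible T F (Walk.cons hva p) ∧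
      ∀ x ∈ p.support, ¬ (T.deleteEdges {s(v, a)}).Reachable v x := by
  intro n
  induction n with
  | zero =>
    intro v a hva hcard
    exfalso
    have hmem : a ∈ {x | ¬ (T.deleteEdges {s(v, a)}).Reachable v x} :=
      bridge_not_reach hA hva
    have := Set.ncard_eq_zero (Set.toFinite _) |>.mp (Nat.le_zero.mp hcard)
    rw [this] at hmem
    exact hmem
  | succ n ih =>
    intro v a hva hcard
    by_cases hleaf : IsLeaf T a
    · refine ⟨a, hleaf, Walk.nil, by simp [hva.ne], Admissible.single hva, ?_⟩
      intro x hx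
      simp only [Walk.support_nil, List.mem_singleton] at hx
      subst hx
      exact bridge_not_reach hA hva
    · -- a is internal
      obtain ⟨b, hab, hbv⟩ := not_leaf_exists_other hleaf hva.symm
      have hFa := hF a hleaf
      have hne : (⟨v, hva.symm⟩ : T.neighborSet a) ≠ ⟨b, hab⟩ := by
        intro hcon
        exact hbv ((congrArg Subtype.val hcon : v = b).symm)
      obtain ⟨m, hm⟩ := exists_adj_of_connected hFa hne
      have ham : T.Adj a m.1 := m.2
      have hvm : v ≠ m.1 := by
        intro hcon
        have hem : (⟨v, hva.symm⟩ : T.neighborSet a) = m := Subtype.ext hcon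
        rw [hem] at hm
        exact (F a).irrefl hm
      have hss := branch_ssubset hA hva ham hvm
      have hlt : Set.ncard {x | ¬ (T.deleteEdges {s(a, m.1)}).Reachable a x} < n + 1 :=
        lt_of_lt_of_le (Set.ncard_lt_ncard hss (Set.toFinite _)) hcard
      obtain ⟨l, hl, q, hq1, hq2, hq3⟩ := ih ham (Nat.lt_succ_iff.mp hlt)
      have hvnotq : v ∉ q.support := by
        intro hmem
        refine hq3 v hmem ?_
        refine Adj.reachable ?_
        rw [deleteEdges_adj]
        refine ⟨hva.symm, ?_⟩
        simp only [Set.mem_singleton_iff, Sym2.congr_right]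
        exact fun hcon => hvm hcon
      refine ⟨l, hl, Walk.cons ham q, ?_, ?_, ?_⟩
      · refine Walk.IsPath.cons hq1 ?_
        simp only [Walk.support_cons, List.mem_cons]
        rintro (rfl | hmem)
        · exact (T.irrefl hva)
        · exact hvnotq hmem
      · refine Admissible.cons hva ham q ?_ hq2
        exact hm
      · intro x hx
        simp only [Walk.support_cons, List.mem_cons] at hx
        rcases hx with rfl | hx
        · exact bridge_not_reach hA hva
        · exact fun hreach => hq3 x hx (reach_trans_edge hA hva ham hvm hreach)

lemma exists_acc_leaf_branch' (hA : T.IsAcyclic)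
    (hF : ∀ v : V, ¬ IsLeaf T v → (F v).Connected) {v a : V} (hva : T.Adj v a) :
    ∃ (l : V) (hl : IsLeaf T l) (p : T.Walk a l),
      (Walk.cons hva p).IsPath ∧ Admissible T F (Walk.cons hva p) ∧
      ∀ x ∈ p.support, ¬ (T.deleteEdges {s(v, a)}).Reachable v x :=
  exists_acc_leaf_branch hA hF _ hva le_rfl

lemma reach_in_delete {v m u x z : V} (W : T.Walk u x) (hv : v ∉ W.support)
    (hz : z ∈ W.support) : (T.deleteEdges {s(v, m)}).Reachable u z := by
  classical
  refine reach_of_mem_support (W.toDeleteEdges {s(v, m)} fun e he hmem => ?_) ?_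
  · rw [Set.mem_singleton_iff] at hmem
    subst hmem
    exact hv (W.fst_mem_support_of_mem_edges he)
  · simpa [Walk.support_transfer] using hz

lemma reach_of_brk (hT : T.IsTree) (hF : ∀ v : V, ¬ IsLeaf T v → (F v).Connected) :
    ∀ (n : ℕ) {x y : V} (hx : IsLeaf T x) (hy : IsLeaf T y) (p : T.Walk x y),
      p.IsPath → brk F p ≤ n → (accGraph T F).Reachable ⟨x, hx⟩ ⟨y, hy⟩ := by
  have hA := hT.2
  intro n
  induction n using Nat.strong_induction_on with
  | _ n IH =>
  intro x y hx hy p hp hbrk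
  by_cases hadm : Admissible T F p
  · rcases eq_or_ne x y with rfl | hne
    · exact Reachable.refl _
    · refine Adj.reachable ?_
      rw [accGraph, fromRel_adj]
      exact ⟨by simpa using hne, Or.inl ⟨p, hp, hadm⟩⟩
  · obtain ⟨u, v, w, h1, h2, q, r, hdec, hadmpre, hnot⟩ := first_break p hadm
    subst hdec
    -- support decomposition
    have hpsup : (q.append (Walk.cons h1 (Walk.cons h2 r))).support
        = q.support ++ (v :: r.support) := by
      rw [Walk.support_append]
      simp
    have hnd : (q.support ++ (v :: r.support)).Nodup := by
      rw [← hpsup]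
      exact hp.support_nodup
    rw [List.nodup_append] at hnd
    obtain ⟨hqnd, hvrnd, hdisj⟩ := hnd
    have hvq : v ∉ q.support := fun hmem => hdisj v hmem v List.mem_cons_self rfl
    have hvr : v ∉ r.support := by
      rw [List.nodup_cons] at hvrnd
      exact hvrnd.1
    have hrnd : r.support.Nodup := by
      rw [List.nodup_cons] at hvrnd
      exact hvrnd.2
    have huq : u ∈ q.support := q.end_mem_support
    have huw : u ≠ w := by
      intro hcon
      exact hdisj u huq w (by simp [r.start_mem_support]) hcon
    -- v is internal
    have hvleaf : ¬ IsLeaf T v := by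
      rintro ⟨z, hz, huniq⟩
      exact huw ((huniq u h1.symm).trans (huniq w h2).symm)
    have hFv := hF v hvleaf
    -- markers at v
    have hmne : (⟨u, h1.symm⟩ : T.neighborSet v) ≠ ⟨w, h2⟩ := by
      intro hcon
      exact huw (congrArg Subtype.val hcon)
    have hreachm := hFv.preconnected ⟨u, h1.symm⟩ ⟨w, h2⟩
    obtain ⟨P, hP⟩ := hreachm.exists_walk_length_eq_dist
    set d := (F v).dist ⟨u, h1.symm⟩ ⟨w, h2⟩ with hd
    have hd1 : 1 ≤ d := hreachm.pos_dist_of_ne hmne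
    cases P with
    | nil => simp at hP; omega
    | @cons _ m _ hadjm Q =>
      have hQlen : (F v).dist m ⟨w, h2⟩ ≤ d - 1 := by
        have := SimpleGraph.dist_le Q
        simp only [Walk.length_cons] at hP
        omega
      have hd2 : 2 ≤ d := by
        have hdne1 : d ≠ 1 := by
          intro hcon
          simp only [Walk.length_cons] at hP
          have hm0 : Q.length = 0 := by omega
          have hmw := Walk.eq_of_length_eq_zero hm0
          exact absurd (hmw ▸ hadjm) hnot
        omega
      have hdm1 : 1 ≤ (F v).dist m ⟨w, h2⟩ := by
        have htri := hFv.dist_triangle (u := (⟨u, h1.symm⟩ : T.neighborSet v)) (v := m)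
          (w := (⟨w, h2⟩ : T.neighborSet v))
        have hle1 : (F v).dist ⟨u, h1.symm⟩ m ≤ 1 := by
          simpa using SimpleGraph.dist_le (Walk.cons hadjm Walk.nil)
        omega
      have hwm : w ≠ m.1 := by
        intro hcon
        have : (⟨w, h2⟩ : T.neighborSet v) = m := Subtype.ext hcon
        rw [← this] at hdm1
        simp [SimpleGraph.dist_self] at hdm1
      have hum : u ≠ m.1 := by
        intro hcon
        have : (⟨u, h1.symm⟩ : T.neighborSet v) = m := Subtype.ext hcon
        rw [this] at hadjm
        exact (F v).irrefl hadjm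
      have hvmadj : T.Adj v m.1 := m.2
      obtain ⟨l, hl, s, hs1, hs2, hs3⟩ := exists_acc_leaf_branch' hA hF hvmadj
      -- reachability of q and r supports in the deleted graph
      have hadjvu : (T.deleteEdges {s(v, m.1)}).Adj v u := by
        rw [deleteEdges_adj]
        refine ⟨h1.symm, ?_⟩
        simp only [Set.mem_singleton_iff, Sym2.congr_right]
        exact fun hcon => hum hcon
      have hadjvw : (T.deleteEdges {s(v, m.1)}).Adj v w := by
        rw [deleteEdges_adj]
        refine ⟨h2, ?_⟩
        simp only [Set.mem_singleton_iff, Sym2.congr_right]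
        exact fun hcon => hwm hcon
      have hreachq : ∀ z ∈ q.support, (T.deleteEdges {s(v, m.1)}).Reachable v z := by
        intro z hz
        refine hadjvu.reachable.trans (reach_in_delete q.reverse ?_ ?_)
        · simpa [Walk.support_reverse] using hvq
        · simpa [Walk.support_reverse] using hz
      have hreachr : ∀ z ∈ r.support, (T.deleteEdges {s(v, m.1)}).Reachable v z := by
        intro z hz
        exact hadjvw.reachable.trans (reach_in_delete r hvr hz)
      -- the first accessibility walk, from x to l
      have hadjm' : (F v).Adj ⟨u, h1.symm⟩ ⟨m.1, hvmadj⟩ := hadjm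
      have hadmW1 : Admissible T F (q.append (Walk.cons h1 (Walk.cons hvmadj s))) :=
        adm_append' q h1 _ hadmpre (Admissible.cons h1 hvmadj s hadjm' hs2)
      have hW1sup : (q.append (Walk.cons h1 (Walk.cons hvmadj s))).support
          = q.support ++ (v :: s.support) := by
        rw [Walk.support_append]
        simp
      have hsnd : (v :: s.support).Nodup := by
        have := hs1.support_nodup
        simpa using this
      have hW1path : (q.append (Walk.cons h1 (Walk.cons hvmadj s))).IsPath := by
        rw [Walk.isPath_def, hW1sup]
        refine List.Nodup.append hqnd hsnd ?_
        intro z hzq hzs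
        rcases List.mem_cons.mp hzs with rfl | hzs
        · exact hvq hzq
        · exact hs3 z hzs (hreachq z hzq)
      have hxl : x ≠ l := by
        intro hcon
        exact hs3 l s.end_mem_support (hcon ▸ hreachq x q.start_mem_support)
      have hadjxl : (accGraph T F).Adj ⟨x, hx⟩ ⟨l, hl⟩ := by
        rw [accGraph, fromRel_adj]
        exact ⟨by simpa using hxl, Or.inl ⟨_, hW1path, hadmW1⟩⟩
      -- the second walk, from l to y
      have hadmW2pre : Admissible T F (s.reverse.append (Walk.cons hvmadj.symm Walk.nil)) := by
        rw [← Walk.reverse_cons hvmadj]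
        exact adm_reverse hs2
      have hbrkW2 : brk F (s.reverse.append (Walk.cons hvmadj.symm (Walk.cons h2 r)))
          = ((F v).dist ⟨m.1, hvmadj.symm.symm⟩ ⟨w, h2⟩ - 1) + brk F (Walk.cons h2 r) := by
        rw [brk_append s.reverse hvmadj.symm _ hadmW2pre, brk_cons_cons]
      have hmeq : (⟨m.1, hvmadj.symm.symm⟩ : T.neighborSet v) = m := Subtype.ext rfl
      rw [hmeq] at hbrkW2
      have hbrkp : brk F (q.append (Walk.cons h1 (Walk.cons h2 r)))
          = (d - 1) + brk F (Walk.cons h2 r) := by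
        rw [brk_append q h1 _ hadmpre, brk_cons_cons, ← hd]
      have hW2path : (s.reverse.append (Walk.cons hvmadj.symm (Walk.cons h2 r))).IsPath := by
        rw [Walk.isPath_def, Walk.support_append]
        simp only [Walk.support_cons, List.tail_cons]
        rw [Walk.support_reverse]
        refine List.Nodup.append (by simpa using hsnd.of_cons) ?_ ?_
        · exact List.nodup_cons.mpr ⟨hvr, hrnd⟩
        · intro z hzs hzvr
          have hzs' : z ∈ s.support := List.mem_reverse.mp hzs
          rcases List.mem_cons.mp hzvr with rfl | hzr
          · exact hs3 _ hzs' (Reachable.refl _)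
          · exact hs3 z hzs' (hreachr z hzr)
      have hlty : brk F (s.reverse.append (Walk.cons hvmadj.symm (Walk.cons h2 r))) < n := by
        rw [hbrkW2]
        rw [hbrkp] at hbrk
        omega
      have hIH := IH _ hlty hl hy _ hW2path le_rfl
      exact hadjxl.reachable.trans hIH

/-! ### Backward direction -/

lemma acc_symm {a b : V} (h : Accessible T F a b) : Accessible T F b a := by
  obtain ⟨p, hp, hadm⟩ := h
  exact ⟨p.reverse, hp.reverse, adm_reverse hadm⟩

lemma branch_snd {v m₀ l m : V} (h0 : T.Adj v m₀) (P' : T.Walk m₀ l)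
    (hP : (Walk.cons h0 P').IsPath) (hm : m₀ ≠ m)
    (hnr : ¬ (T.deleteEdges {s(v, m)}).Reachable v l) : False := by
  apply hnr
  have hvP : v ∉ P'.support := by
    have := hP.support_nodup
    simp only [Walk.support_cons, List.nodup_cons] at this
    exact this.1
  have hadj : (T.deleteEdges {s(v, m)}).Adj v m₀ := by
    rw [deleteEdges_adj]
    refine ⟨h0, ?_⟩
    simp only [Set.mem_singleton_iff, Sym2.congr_right]
    exact fun hcon => hm hcon
  exact hadj.reachable.trans (reach_in_delete P' hvP P'.end_mem_support)

lemma branch_snd' {v m₀ l m : V} (h0 : T.Adj v m₀) (P' : T.Walk m₀ l)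
    (hP : (Walk.cons h0 P').IsPath)
    (hnr : ¬ (T.deleteEdges {s(v, m)}).Reachable v l) : m₀ = m := by
  by_contra hne
  exact branch_snd h0 P' hP hne hnr

lemma branch_unique (hT : T.IsTree) {v l m1 m2 : V} (hne : l ≠ v)
    (hb1 : ¬ (T.deleteEdges {s(v, m1)}).Reachable v l)
    (hb2 : ¬ (T.deleteEdges {s(v, m2)}).Reachable v l) : m1 = m2 := by
  classical
  obtain ⟨W⟩ := hT.1.preconnected v l
  obtain ⟨p, hp⟩ : ∃ p : T.Walk v l, p.IsPath := ⟨W.toPath.1, W.toPath.2⟩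
  obtain ⟨x, h0, P', rfl⟩ := Walk.exists_eq_cons_of_ne (Ne.symm hne) p
  exact (branch_snd' h0 P' hp hb1).symm.trans (branch_snd' h0 P' hp hb2)

lemma acc_step (hT : T.IsTree) {v l1 l2 : V} (hne1 : l1 ≠ v) (hne2 : l2 ≠ v)
    (hacc : Accessible T F l1 l2) {m1 : V} (hm1 : T.Adj v m1)
    (hb1 : ¬ (T.deleteEdges {s(v, m1)}).Reachable v l1) :
    ∃ m2, ∃ (hm2 : T.Adj v m2), (¬ (T.deleteEdges {s(v, m2)}).Reachable v l2) ∧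
      ((⟨m1, hm1⟩ : T.neighborSet v) = ⟨m2, hm2⟩ ∨ (F v).Adj ⟨m1, hm1⟩ ⟨m2, hm2⟩) := by
  classical
  obtain ⟨w, hwpath, hwadm⟩ := hacc
  by_cases hvmem : v ∈ w.support
  · have hsplit := w.take_spec hvmem
    have hw1p : (w.takeUntil v hvmem).IsPath := hwpath.takeUntil hvmem
    have hw2p : (w.dropUntil v hvmem).IsPath := hwpath.dropUntil hvmem
    obtain ⟨d, h2, r, hw2⟩ := Walk.exists_eq_cons_of_ne (Ne.symm hne2) (w.dropUntil v hvmem)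
    obtain ⟨c, hc, rr, hw1r⟩ :=
      Walk.exists_eq_cons_of_ne (Ne.symm hne1) (w.takeUntil v hvmem).reverse
    have hw1eq : w.takeUntil v hvmem = rr.reverse.append (Walk.cons hc.symm Walk.nil) := by
      have h := congrArg Walk.reverse hw1r
      rw [Walk.reverse_reverse] at h
      rw [h, Walk.reverse_cons]
    have hweq : w = rr.reverse.append (Walk.cons hc.symm (Walk.cons h2 r)) := by
      rw [← hsplit, hw1eq, hw2, ← Walk.append_assoc]
      simp [Walk.cons_append, Walk.nil_append]
    have hadm' : Admissible T F (rr.reverse.append (Walk.cons hc.symm (Walk.cons h2 r))) := by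
      rw [← hweq]; exact hwadm
    have hadjcd := adm_junction rr.reverse hc.symm h2 r hadm'
    have hcp : (Walk.cons hc rr).IsPath := by
      rw [← hw1r]; exact hw1p.reverse
    have hc_eq : c = m1 := branch_snd' hc rr hcp hb1
    subst hc_eq
    have hvr : v ∉ r.support := by
      have := hw2p
      rw [hw2] at this
      have h' := this.support_nodup
      simp only [Walk.support_cons, List.nodup_cons] at h'
      exact h'.1
    refine ⟨d, h2, ?_, Or.inr hadjcd⟩
    intro hre
    have hdl2 : (T.deleteEdges {s(v, d)}).Reachable d l2 :=
      reach_in_delete r hvr r.end_mem_support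
    exact bridge_not_reach hT.2 h2 (hre.trans hdl2.symm)
  · refine ⟨m1, hm1, ?_, Or.inl rfl⟩
    intro hre
    apply hb1
    have hv' : v ∉ w.reverse.support := by
      simpa [Walk.support_reverse] using hvmem
    refine hre.trans (reach_in_delete w.reverse hv' ?_)
    simp [Walk.support_reverse, w.start_mem_support]

lemma acc_walk_rec (hT : T.IsTree) {v : V} (hv : ¬ IsLeaf T v) :
    ∀ (x y : {z : V // IsLeaf T z}) (W : (accGraph T F).Walk x y)
      {m1 m2 : V} (hm1 : T.Adj v m1) (hm2 : T.Adj v m2),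
      ¬ (T.deleteEdges {s(v, m1)}).Reachable v x.1 →
      ¬ (T.deleteEdges {s(v, m2)}).Reachable v y.1 →
      (F v).Reachable ⟨m1, hm1⟩ ⟨m2, hm2⟩ := by
  intro x y W
  induction W with
  | @nil x' =>
    intro m1 m2 hm1 hm2 hb1 hb2
    have hne : x'.1 ≠ v := fun hcon => hv (hcon ▸ x'.2)
    have : m1 = m2 := branch_unique hT hne hb1 hb2
    subst this
    exact Reachable.refl _
  | @cons x' z' y' hadj W' ih =>
    intro m1 m2 hm1 hm2 hb1 hb2
    have hnex : x'.1 ≠ v := fun hcon => hv (hcon ▸ x'.2)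
    have hnez : z'.1 ≠ v := fun hcon => hv (hcon ▸ z'.2)
    have hacc : Accessible T F x'.1 z'.1 := by
      rw [accGraph, fromRel_adj] at hadj
      rcases hadj.2 with h | h
      · exact h
      · exact acc_symm h
    obtain ⟨m', hm', hb', hor⟩ := acc_step hT hnex hnez hacc hm1 hb1
    have hrest := ih hm' hm2 hb' hb2
    rcases hor with heq | hadj'
    · rwa [heq]
    · exact hadj'.reachable.trans hrest

end stmt0aux

open stmt0aux

/-- the accessibility graph of a graph-labelled tree is connected iff
every internal node carries a connected label graph. -/
theorem stmt0 [Fintype V] (T : SimpleGraph V) (hT : T.IsTree)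
    (F : ∀ v : V, SimpleGraph (T.neighborSet v)) :
    (accGraph T F).Connected ↔ ∀ v : V, ¬ IsLeaf T v → (F v).Connected := by
  classical
  constructor
  · intro hconn v hvleaf
    obtain ⟨⟨l0, hl0⟩⟩ := hconn.nonempty
    have hl0v : v ≠ l0 := fun hcon => hvleaf (hcon ▸ hl0)
    obtain ⟨W0⟩ := hT.1.preconnected v l0
    obtain ⟨a, hva, -, -⟩ := Walk.exists_eq_cons_of_ne hl0v W0
    rw [connected_iff]
    refine ⟨?_, ⟨⟨a, hva⟩⟩⟩
    rintro ⟨ma, hma⟩ ⟨mb, hmb⟩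
    obtain ⟨la, hla, hra⟩ := exists_leaf_branch' hT.2 hma
    obtain ⟨lb, hlb, hrb⟩ := exists_leaf_branch' hT.2 hmb
    obtain ⟨W⟩ := hconn.preconnected ⟨la, hla⟩ ⟨lb, hlb⟩
    exact acc_walk_rec hT hvleaf _ _ W hma hmb hra hrb
  · intro hF
    rw [connected_iff]
    have hVne : Nonempty V := hT.1.nonempty
    obtain ⟨v0⟩ := hVne
    have hedge : ∃ a, T.Adj v0 a := by
      by_contra hno
      push_neg at hno
      have hnl : ¬ IsLeaf T v0 := by rintro ⟨w, hw, -⟩; exact hno w hw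
      obtain ⟨⟨a, ha⟩⟩ := (hF v0 hnl).nonempty
      exact hno a ha
    obtain ⟨a, hva⟩ := hedge
    obtain ⟨l, hl, -⟩ := exists_leaf_branch' hT.2 hva
    refine ⟨?_, ⟨⟨l, hl⟩⟩⟩
    rintro ⟨x, hx⟩ ⟨y, hy⟩
    obtain ⟨W⟩ := hT.1.preconnected x y
    exact reach_of_brk hT hF (brk F W.toPath.1) hx hy W.toPath.1 W.toPath.2 le_rfl
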